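/- For every j ≥ 0, setting m = 2^j − 1, there exists a move sequence that cleanly computes m with space at most j + 1 and total move count at most (m+1)^(log₂ 3), where the exponentiation is real-number exponentiation with exponent log₂ 3 = Real.logb 2 3. -/
import Mathlib


/-- A move sequence in the reversible pebble game modelling intermediate
uncomputation of iterated out-of-place squarings.  `conf t` is the
configuration (finite set of pebbled nodes) at time `t ≤ T`; at step
`t < T` exactly the node `move t` is toggled, subject to the legality
condition that either `move t = 0` or `move t ≥ 1` and its predecessor
is pebbled. -/
structure MoveSeq where
  /-- total move count -/
  T : ℕ
  /-- configuration at each time step -/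
  conf : ℕ → Finset ℕ
  /-- the node toggled at step `t` (relevant for `t < T`) -/
  move : ℕ → ℕ
  init : conf 0 = ∅
  legal : ∀ t < T, move t = 0 ∨ (1 ≤ move t ∧ move t - 1 ∈ conf t)
  step : ∀ t < T, conf (t + 1) =
    if move t ∈ conf t then (conf t).erase (move t) else insert (move t) (conf t)

/-- The space of a move sequence: the maximum number of pebbled nodes over
all visited configurations. -/
def MoveSeq.space (M : MoveSeq) : ℕ :=
  (Finset.range (M.T + 1)).sup fun t => (M.conf t).card

/-- The number of squaring operations: the number of moves toggling a node `i ≥ 1`. -/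
def MoveSeq.squarings (M : MoveSeq) : ℕ :=
  ((Finset.range M.T).filter fun t => 1 ≤ M.move t).card

/-- The sequence cleanly computes `m` if its final configuration is `{m}`. -/
def MoveSeq.CleanlyComputes (M : MoveSeq) (m : ℕ) : Prop :=
  M.conf M.T = {m}

/-- Some configuration visited by the sequence contains the node `i`. -/
def MoveSeq.Visits (M : MoveSeq) (i : ℕ) : Prop :=
  ∃ t ≤ M.T, i ∈ M.conf t

namespace PebbleAux

def toggle (S : Finset ℕ) (i : ℕ) : Finset ℕ :=
  if i ∈ S then S.erase i else insert i S

def run (S : Finset ℕ) (L : List ℕ) : Finset ℕ := L.foldl toggle S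

@[simp] lemma run_nil (S : Finset ℕ) : run S [] = S := rfl
@[simp] lemma run_cons (S : Finset ℕ) (i : ℕ) (L : List ℕ) :
    run S (i :: L) = run (toggle S i) L := rfl
lemma run_append (S : Finset ℕ) (L1 L2 : List ℕ) :
    run S (L1 ++ L2) = run (run S L1) L2 := List.foldl_append ..

lemma toggle_toggle (S : Finset ℕ) (i : ℕ) : toggle (toggle S i) i = S := by
  unfold toggle
  by_cases h : i ∈ S
  · simp [h, Finset.insert_erase h]
  · simp [h, Finset.erase_insert h]

lemma mem_toggle_of_ne {a i : ℕ} (h : a ≠ i) (S : Finset ℕ) :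
    a ∈ toggle S i ↔ a ∈ S := by
  unfold toggle
  split_ifs <;> simp [h]

lemma toggle_insert {i a : ℕ} (h : i ≠ a) (S : Finset ℕ) :
    toggle (insert a S) i = insert a (toggle S i) := by
  unfold toggle
  by_cases hi : i ∈ S
  · rw [if_pos (Finset.mem_insert_of_mem hi), if_pos hi,
      Finset.erase_insert_of_ne (Ne.symm h)]
  · rw [if_neg (by simp [h, hi]), if_neg hi, Finset.insert_comm]

lemma card_toggle_le (S : Finset ℕ) (i : ℕ) : (toggle S i).card ≤ S.card + 1 := by
  unfold toggle
  split_ifs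
  · exact (Finset.card_erase_le).trans (Nat.le_succ _)
  · exact Finset.card_insert_le _ _

def Legal : Finset ℕ → List ℕ → Prop
  | _, [] => True
  | S, i :: L => (i = 0 ∨ (1 ≤ i ∧ i - 1 ∈ S)) ∧ Legal (toggle S i) L

def Sp : Finset ℕ → List ℕ → ℕ
  | S, [] => S.card
  | S, i :: L => max S.card (Sp (toggle S i) L)

lemma card_le_Sp (L : List ℕ) : ∀ S, S.card ≤ Sp S L := by
  induction L with
  | nil => intro S; exact le_rfl
  | cons i L ih => intro S; exact le_max_left _ _

lemma Legal_append (L1 : List ℕ) : ∀ S L2, Legal S (L1 ++ L2) ↔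
    Legal S L1 ∧ Legal (run S L1) L2 := by
  induction L1 with
  | nil => intro S L2; simp [Legal]
  | cons i L1 ih =>
    intro S L2
    simp only [List.cons_append, Legal, run_cons, List.append_eq, ih, and_assoc]

lemma Sp_append (L1 : List ℕ) : ∀ S L2, Sp S (L1 ++ L2) =
    max (Sp S L1) (Sp (run S L1) L2) := by
  induction L1 with
  | nil =>
    intro S L2
    simp only [List.nil_append, run_nil, Sp]
    have := card_le_Sp L2 S
    omega
  | cons i L1 ih =>
    intro S L2
    simp only [List.cons_append, Sp, run_cons, List.append_eq, ih]
    omega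

lemma run_reverse (L : List ℕ) : ∀ S, run (run S L) L.reverse = S := by
  induction L with
  | nil => intro S; rfl
  | cons i L ih =>
    intro S
    simp only [List.reverse_cons, run_cons, run_append, ih]
    simpa [run, toggle_toggle] using toggle_toggle S i

lemma Legal_reverse (L : List ℕ) : ∀ S, Legal S L → Legal (run S L) L.reverse := by
  induction L with
  | nil => intro S _; trivial
  | cons i L ih =>
    intro S h
    simp only [List.reverse_cons, run_cons, Legal_append, run_reverse]
    refine ⟨ih _ h.2, ?_, trivial⟩
    rcases h.1 with h0 | ⟨h1, h2⟩
    · exact Or.inl h0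
    · exact Or.inr ⟨h1, (mem_toggle_of_ne (by omega) S).2 h2⟩

lemma Sp_reverse (L : List ℕ) : ∀ S, Sp (run S L) L.reverse = Sp S L := by
  induction L with
  | nil => intro S; rfl
  | cons i L ih =>
    intro S
    simp only [List.reverse_cons, run_cons, Sp_append, ih, run_reverse]
    have h1 : (toggle S i).card ≤ Sp (toggle S i) L := card_le_Sp _ _
    simp only [Sp, toggle_toggle]
    omega

lemma run_insert (L : List ℕ) : ∀ S a, (∀ i ∈ L, i ≠ a) →
    run (insert a S) L = insert a (run S L) := by
  induction L with
  | nil => intro S a _; rfl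
  | cons i L ih =>
    intro S a h
    simp only [run_cons, toggle_insert (h i (by simp)) S]
    exact ih _ _ fun i hi => h i (by simp [hi])

lemma Legal_insert (L : List ℕ) : ∀ S a, (∀ i ∈ L, i ≠ a) → Legal S L →
    Legal (insert a S) L := by
  induction L with
  | nil => intro S a _ _; trivial
  | cons i L ih =>
    intro S a h hl
    refine ⟨?_, ?_⟩
    · rcases hl.1 with h0 | ⟨h1, h2⟩
      · exact Or.inl h0
      · exact Or.inr ⟨h1, Finset.mem_insert_of_mem h2⟩
    · rw [toggle_insert (h i (by simp)) S]
      exact ih _ _ (fun i hi => h i (by simp [hi])) hl.2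

lemma Sp_insert (L : List ℕ) : ∀ S a, (∀ i ∈ L, i ≠ a) →
    Sp (insert a S) L ≤ Sp S L + 1 := by
  induction L with
  | nil => intro S a _; exact Finset.card_insert_le _ _
  | cons i L ih =>
    intro S a h
    simp only [Sp, toggle_insert (h i (by simp)) S]
    have h1 := ih (toggle S i) a fun i hi => h i (by simp [hi])
    have h2 : (insert a S).card ≤ S.card + 1 := Finset.card_insert_le _ _
    omega

def seqL : ℕ → ℕ → List ℕ
  | b, 0 => [b]
  | b, j+1 => seqL b j ++ seqL (b + 2^j) j ++ (seqL b j).reverse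

lemma length_seqL (j : ℕ) : ∀ b, (seqL b j).length = 3 ^ j := by
  induction j with
  | zero => intro b; rfl
  | succ j ih =>
    intro b
    simp only [seqL, List.length_append, List.length_reverse, ih, pow_succ]
    ring

lemma mem_seqL (j : ℕ) : ∀ b i, i ∈ seqL b j → b ≤ i ∧ i < b + 2 ^ j := by
  induction j with
  | zero => intro b i hi; simp only [seqL, List.mem_singleton] at hi; omega
  | succ j ih =>
    intro b i hi
    have h2 : (1:ℕ) ≤ 2 ^ j := Nat.one_le_two_pow
    have hp : (2:ℕ) ^ (j+1) = 2 ^ j + 2 ^ j := by rw [pow_succ]; ring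
    simp only [seqL, List.mem_append, List.mem_reverse] at hi
    rcases hi with (hi | hi) | hi
    · have := ih b i hi; omega
    · have := ih (b + 2^j) i hi; omega
    · have := ih b i hi; omega

lemma main (j : ℕ) : ∀ b S, (∀ i, b ≤ i → i < b + 2 ^ j → i ∉ S) →
    (b = 0 ∨ b - 1 ∈ S) →
    run S (seqL b j) = insert (b + 2 ^ j - 1) S ∧ Legal S (seqL b j) ∧
      Sp S (seqL b j) ≤ S.card + (j + 1) := by
  induction j with
  | zero =>
    intro b S hd hb
    have hbS : b ∉ S := hd b le_rfl (by omega)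
    have ht : toggle S b = insert b S := by unfold toggle; rw [if_neg hbS]
    refine ⟨?_, ⟨?_, trivial⟩, ?_⟩
    · show toggle S b = _
      rw [ht]; norm_num
    · rcases Nat.eq_zero_or_pos b with h0 | h1
      · exact Or.inl h0
      · rcases hb with h0 | h2
        · exact Or.inl h0
        · exact Or.inr ⟨h1, h2⟩
    · show max S.card (Sp (toggle S b) []) ≤ _
      show max S.card (toggle S b).card ≤ _
      have := card_toggle_le S b
      omega
  | succ j ih =>
    intro b S hd hb
    have h2 : (1:ℕ) ≤ 2 ^ j := Nat.one_le_two_pow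
    have hp : (2:ℕ) ^ (j+1) = 2 ^ j + 2 ^ j := by rw [pow_succ]; ring
    set a := b + 2 ^ j - 1 with ha
    set m := b + 2 ^ j + 2 ^ j - 1 with hmm
    set L1 := seqL b j with hL1
    set L2 := seqL (b + 2 ^ j) j with hL2
    -- phase 1
    obtain ⟨r1, l1, s1⟩ := ih b S (fun i h1' h2' => hd i h1' (by omega)) hb
    rw [← hL1] at r1 l1 s1
    rw [← ha] at r1
    -- phase 2
    have hd2 : ∀ i, b + 2 ^ j ≤ i → i < b + 2 ^ j + 2 ^ j → i ∉ insert a S := by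
      intro i h1' h2' hi
      rcases Finset.mem_insert.1 hi with h | h
      · omega
      · exact hd i (by omega) (by omega) h
    obtain ⟨r2, l2, s2⟩ := ih (b + 2 ^ j) (insert a S) hd2
      (Or.inr (by rw [← ha]; exact Finset.mem_insert_self _ _))
    rw [← hL2] at r2 l2 s2
    rw [show b + 2 ^ j + 2 ^ j - 1 = m from rfl] at r2
    -- phase 3
    have hnot : ∀ i ∈ L1, i ≠ m := by
      intro i hi
      have := mem_seqL j b i hi
      omega
    have hnotr : ∀ i ∈ L1.reverse, i ≠ m := fun i hi => hnot i (List.mem_reverse.1 hi)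
    have r3 : run (insert m (insert a S)) L1.reverse = insert m S := by
      rw [run_insert _ _ _ hnotr, ← r1, run_reverse]
    have l3 : Legal (insert m (insert a S)) L1.reverse := by
      apply Legal_insert _ _ _ hnotr
      have := Legal_reverse L1 S l1
      rwa [r1] at this
    have s3 : Sp (insert m (insert a S)) L1.reverse ≤ S.card + (j + 2) := by
      have h1 := Sp_insert L1.reverse (insert a S) m hnotr
      have h2 : Sp (insert a S) L1.reverse = Sp S L1 := by rw [← r1, Sp_reverse]
      omega
    have hseq : seqL b (j+1) = L1 ++ L2 ++ L1.reverse := rfl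
    have hcard : (insert a S).card ≤ S.card + 1 := Finset.card_insert_le _ _
    have hm' : b + 2 ^ (j+1) - 1 = m := by omega
    refine ⟨?_, ?_, ?_⟩
    · rw [hseq, run_append, run_append, r1, r2, hm', r3]
    · rw [hseq, Legal_append, Legal_append, run_append, r1, r2]
      exact ⟨⟨l1, l2⟩, l3⟩
    · rw [hseq, Sp_append, Sp_append, run_append, r1, r2]
      omega

lemma card_take_le_Sp (L : List ℕ) : ∀ S t, (run S (L.take t)).card ≤ Sp S L := by
  induction L with
  | nil => intro S t; simp [Sp]
  | cons i L ih =>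
    intro S t
    match t with
    | 0 => exact le_max_left _ _
    | t + 1 =>
      simp only [List.take_succ_cons, run_cons]
      exact (ih (toggle S i) t).trans (le_max_right _ _)

lemma legal_index (L : List ℕ) : ∀ S, Legal S L → ∀ t < L.length,
    L.getD t 0 = 0 ∨ (1 ≤ L.getD t 0 ∧ L.getD t 0 - 1 ∈ run S (L.take t)) := by
  induction L with
  | nil => intro S _ t ht; simp at ht
  | cons i L ih =>
    intro S h t ht
    match t with
    | 0 => exact h.1
    | t + 1 =>
      simp only [List.getD_cons_succ, List.take_succ_cons, run_cons]
      exact ih (toggle S i) h.2 t (by simpa using ht)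

end PebbleAux

open PebbleAux

/-- for `m = 2^j - 1`, clean computation with space `≤ j + 1` and
move count at most `(m+1)^(log₂ 3)`. -/
theorem binary_recursion_rpow_time (j m : ℕ) (hm : m = 2 ^ j - 1) :
    ∃ M : MoveSeq, M.CleanlyComputes m ∧ M.space ≤ j + 1 ∧
      (M.T : ℝ) ≤ ((m : ℝ) + 1) ^ Real.logb 2 3 := by
  have h1 : (1:ℕ) ≤ 2 ^ j := Nat.one_le_two_pow
  obtain ⟨hr, hl, hs⟩ := main j 0 ∅ (by simp) (Or.inl rfl)
  set L := seqL 0 j with hL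
  have hlen : L.length = 3 ^ j := length_seqL j 0
  refine ⟨⟨L.length, fun t => run ∅ (L.take t), fun t => L.getD t 0, rfl, ?_, ?_⟩,
    ?_, ?_, ?_⟩
  · intro t ht
    exact legal_index L ∅ hl t ht
  · intro t ht
    have hts : L.take (t+1) = L.take t ++ [L.getD t 0] := by
      rw [List.getD_eq_getElem L 0 ht, List.take_succ, List.getElem?_eq_getElem ht]
      rfl
    show run ∅ (L.take (t+1)) = _
    rw [hts, run_append]
    rfl
  · show run ∅ (L.take L.length) = {m}
    rw [List.take_length, hr, hm]
    norm_num
  · show (Finset.range (L.length + 1)).sup _ ≤ j + 1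
    apply Finset.sup_le
    intro t _
    show (run ∅ (L.take t)).card ≤ j + 1
    have := card_take_le_Sp L ∅ t
    have h0 : (∅ : Finset ℕ).card = 0 := rfl
    omega
  · show ((L.length : ℕ) : ℝ) ≤ _
    rw [hlen]
    have hm1 : ((m:ℝ) + 1) = (2:ℝ) ^ j := by
      subst hm
      rw [Nat.cast_sub h1]
      push_cast
      ring
    have h3 : ((2:ℝ) ^ j) ^ Real.logb 2 3 = (3:ℝ) ^ j := by
      rw [← Real.rpow_natCast 2 j, ← Real.rpow_natCast 3 j,
        ← Real.rpow_mul (by norm_num), mul_comm,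
        Real.rpow_mul (by norm_num),
        Real.rpow_logb (by norm_num) (by norm_num) (by norm_num)]
    rw [hm1, h3]
    push_cast
    exact le_rfl
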